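/- In Cat, a functor F : 𝒞 → 𝒟 has the right lifting property with respect to the inclusions 0 → 1, 2 → 𝟚, the functor 2 → 1, and the functor ℙ → 𝟚 collapsing the parallel pair, if and only if F is an isomorphism of categories (fully faithful and bijective on objects). -/

import Mathlib

open CategoryTheory CategoryTheory.Limits

namespace CatWfs

/-- The inclusion `0 → 1` of the empty category into the terminal category. -/
def emptyToPt : Cat.of (Discrete PEmpty) ⟶ Cat.of (Discrete PUnit) :=
  Functor.toCatHom (Functor.empty (Discrete PUnit))

/-- The inclusion `2 → 𝟚` of the discrete two-object category into the interval
category (`Bool` with its usual order `false < true`). -/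
noncomputable def twoToInterval : Cat.of (Discrete Bool) ⟶ Cat.of Bool :=
  Functor.toCatHom (Discrete.functor (fun b => b))

/-- The functor `2 → 1` collapsing the discrete two-object category. -/
def twoToPt : Cat.of (Discrete Bool) ⟶ Cat.of (Discrete PUnit) :=
  Functor.toCatHom (Functor.star (Discrete Bool))

/-- The functor `ℙ → 𝟚` from the parallel-pair category to the interval category
sending both nonidentity arrows to the unique nonidentity arrow. -/
noncomputable def parallelPairToInterval : Cat.of WalkingParallelPair ⟶ Cat.of Bool :=
  Functor.toCatHom <| show WalkingParallelPair ⥤ Bool from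
    parallelPair (homOfLE (by decide : (false : Bool) ≤ true))
      (homOfLE (by decide : (false : Bool) ≤ true))

end CatWfs

open CatWfs

/-- The functor from the interval `Bool` classifying a morphism `φ`. -/
noncomputable def intervalFunctor {D : Type*} [Category D] {d₀ d₁ : D} (φ : d₀ ⟶ d₁) :
    Bool ⥤ D where
  obj b := bif b then d₁ else d₀
  map {x y} h :=
    match x, y, h with
    | false, false, _ => 𝟙 d₀
    | false, true, _ => φ
    | true, true, _ => 𝟙 d₁
    | true, false, h => absurd (leOfHom h) (by decide)
  map_id b := by cases b <;> rfl
  map_comp {x y z} f g := by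
    match x, y, z, f, g with
    | false, false, false, _, _ => simp
    | false, false, true, _, _ => simp
    | false, true, true, _, _ => simp
    | true, true, true, _, _ => simp
    | _, true, false, _, g => exact absurd (leOfHom g) (by decide)
    | true, false, _, f, _ => exact absurd (leOfHom f) (by decide)

theorem catSqAux {A B C' D' : Type} [SmallCategory A] [SmallCategory B] [SmallCategory C']
    [SmallCategory D'] (f : A ⥤ C') (i : A ⥤ B) (p : C' ⥤ D') (g : B ⥤ D')
    (h : f ⋙ p = i ⋙ g) : f.toCatHom ≫ p.toCatHom = i.toCatHom ≫ g.toCatHom :=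
  Cat.ext h

theorem catFacLAux {A B C' : Type} [SmallCategory A] [SmallCategory B] [SmallCategory C']
    (i : A ⥤ B) (l : Cat.of B ⟶ Cat.of C') (f : A ⥤ C') (h : i.toCatHom ≫ l = f.toCatHom) :
    i ⋙ (l.toFunctor : B ⥤ C') = f :=
  congrArg Cat.Hom.toFunctor h

theorem catFacRAux {B C' D' : Type} [SmallCategory B] [SmallCategory C'] [SmallCategory D']
    (l : Cat.of B ⟶ Cat.of C') (p : C' ⥤ D') (g : B ⥤ D') (h : l ≫ p.toCatHom = g.toCatHom) :
    (l.toFunctor : B ⥤ C') ⋙ p = g :=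
  congrArg Cat.Hom.toFunctor h

theorem eqToHom_cancelAux {E : Type} [SmallCategory E] {X Y X' Y' : E} (p p' : X' = X)
    (q q' : Y = Y') (f g : X ⟶ Y)
    (h : eqToHom p ≫ f ≫ eqToHom q = eqToHom p' ≫ g ≫ eqToHom q') : f = g := by
  subst p q
  simpa using h

theorem eqToHom_sandwichAux {E : Type} [SmallCategory E] {X B Y B' : E} (p : X = B)
    (q : B = X) (r : Y = B') (s : B' = Y) (φ : X ⟶ Y) :
    eqToHom p ≫ (eqToHom q ≫ φ ≫ eqToHom r) ≫ eqToHom s = φ := by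
  subst p r
  simp

section Aux

variable {C D : Type} [SmallCategory C] [SmallCategory D] (F : C ⥤ D)

theorem rlpSurj (h : HasLiftingProperty emptyToPt (show Cat.of C ⟶ Cat.of D from F.toCatHom)) :
    Function.Surjective F.obj := by
  intro d
  have sq : CommSq (Functor.empty C).toCatHom
      emptyToPt (show Cat.of C ⟶ Cat.of D from F.toCatHom)
      ((Functor.const (Discrete PUnit)).obj d).toCatHom :=
    ⟨Cat.ext (Functor.empty_ext' _ _)⟩
  exact ⟨sq.lift.toFunctor.obj ⟨⟨⟩⟩, Functor.congr_obj (catFacRAux _ _ _ sq.fac_right) ⟨⟨⟩⟩⟩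

theorem rlpInj (h : HasLiftingProperty twoToPt (show Cat.of C ⟶ Cat.of D from F.toCatHom)) :
    Function.Injective F.obj := by
  intro c₀ c₁ hc
  have sq : CommSq (Discrete.functor (fun b => bif b then c₁ else c₀)).toCatHom
      twoToPt (show Cat.of C ⟶ Cat.of D from F.toCatHom)
      ((Functor.const (Discrete PUnit)).obj (F.obj c₀)).toCatHom := by
    constructor
    apply catSqAux
    apply CategoryTheory.Functor.ext
    case h_obj =>
      rintro ⟨b⟩
      cases b <;> simp [hc]
    case h_map =>
      intro X Y f
      obtain rfl : X = Y := Discrete.ext (Discrete.eq_of_hom f)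
      obtain ⟨⟨p⟩⟩ := f
      have h5 : (⟨⟨p⟩⟩ : X ⟶ X) = 𝟙 X := rfl
      rw [h5]
      simp
  have h0 := Functor.congr_obj (catFacLAux _ _ _ sq.fac_left) ⟨false⟩
  have h1 := Functor.congr_obj (catFacLAux _ _ _ sq.fac_left) ⟨true⟩
  simp [twoToPt, Functor.star] at h0 h1
  exact h0.symm.trans h1

theorem rlpFull (h : HasLiftingProperty twoToInterval (show Cat.of C ⟶ Cat.of D from F.toCatHom)) :
    F.Full := by
  constructor
  intro c₀ c₁ φ
  have sq : CommSq (Discrete.functor (fun b => bif b then c₁ else c₀)).toCatHom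
      twoToInterval (show Cat.of C ⟶ Cat.of D from F.toCatHom)
      (intervalFunctor φ).toCatHom := by
    constructor
    apply catSqAux
    apply CategoryTheory.Functor.ext
    case h_obj => rintro ⟨b⟩; cases b <;> rfl
    case h_map =>
      intro X Y f
      obtain rfl : X = Y := Discrete.ext (Discrete.eq_of_hom f)
      obtain ⟨⟨p⟩⟩ := f
      have h5 : (⟨⟨p⟩⟩ : X ⟶ X) = 𝟙 X := rfl
      rw [h5]; simp
  have h0 := Functor.congr_obj (catFacLAux _ _ _ sq.fac_left) ⟨false⟩
  have h1 := Functor.congr_obj (catFacLAux _ _ _ sq.fac_left) ⟨true⟩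
  simp [twoToInterval] at h0 h1
  let arr : (false : Bool) ⟶ (true : Bool) := homOfLE (by decide)
  refine ⟨eqToHom h0.symm ≫ sq.lift.toFunctor.map arr ≫ eqToHom h1, ?_⟩
  have h2 := Functor.congr_hom (catFacRAux _ _ _ sq.fac_right) arr
  simp only [Functor.comp_map] at h2
  have h6 : (intervalFunctor φ).map arr = φ := rfl
  rw [h6] at h2
  have h2' : F.map (sq.lift.toFunctor.map arr) = _ := h2
  erw [F.map_comp, F.map_comp, h2', eqToHom_map, eqToHom_map]
  exact eqToHom_sandwichAux _ _ _ _ φ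

theorem rlpFaithful
    (h : HasLiftingProperty parallelPairToInterval (show Cat.of C ⟶ Cat.of D from F.toCatHom))
    {c₀ c₁ : C} (f g : c₀ ⟶ c₁) (hfg : F.map f = F.map g) : f = g := by
  have sq : CommSq (parallelPair f g).toCatHom
      parallelPairToInterval (show Cat.of C ⟶ Cat.of D from F.toCatHom)
      (intervalFunctor (F.map f)).toCatHom := by
    constructor
    apply catSqAux
    apply CategoryTheory.Functor.ext
    case h_obj => rintro (_|_) <;> rfl
    case h_map =>
      intro X Y k
      change WalkingParallelPairHom X Y at k
      cases k with
      | left => simp [parallelPairToInterval, intervalFunctor]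
      | right => simp [parallelPairToInterval, intervalFunctor, hfg]
      | id => cases X <;> simp
  have h2 := Functor.congr_hom (catFacLAux _ _ _ sq.fac_left) WalkingParallelPairHom.left
  have h3 := Functor.congr_hom (catFacLAux _ _ _ sq.fac_left) WalkingParallelPairHom.right
  simp only [Functor.comp_map] at h2 h3
  have h4 := h2.symm.trans h3
  simp [parallelPair] at h4
  exact eqToHom_cancelAux _ _ _ _ f g h4

/-- The strict inverse of a functor that is fully faithful and bijective on objects. -/
noncomputable def invFunctor (F : C ⥤ D) [F.Full] [F.Faithful]
    (hb : Function.Bijective F.obj) : D ⥤ C where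
  obj d := (Equiv.ofBijective F.obj hb).symm d
  map {d₀ d₁} φ := F.preimage
    (eqToHom ((Equiv.ofBijective F.obj hb).apply_symm_apply d₀) ≫ φ ≫
      eqToHom ((Equiv.ofBijective F.obj hb).apply_symm_apply d₁).symm)
  map_id d := F.map_injective (by simp; exact (eqToHom_trans _ _).trans (eqToHom_refl _ _))
  map_comp f g := F.map_injective (by simp; erw [eqToHom_trans_assoc, eqToHom_refl, Category.id_comp])

theorem comp_inv (F : C ⥤ D) [F.Full] [F.Faithful] (hb : Function.Bijective F.obj) :
    F ⋙ invFunctor F hb = 𝟭 C := by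
  apply CategoryTheory.Functor.ext
  case h_obj => intro c; exact (Equiv.ofBijective F.obj hb).symm_apply_apply c
  case h_map =>
    intro X Y f
    apply F.map_injective
    simp [invFunctor, eqToHom_map]
    erw [eqToHom_map, eqToHom_map]

theorem inv_comp (F : C ⥤ D) [F.Full] [F.Faithful] (hb : Function.Bijective F.obj) :
    invFunctor F hb ⋙ F = 𝟭 D := by
  apply CategoryTheory.Functor.ext
  case h_obj => intro d; exact (Equiv.ofBijective F.obj hb).apply_symm_apply d
  case h_map => intro X Y f; simp [invFunctor]

theorem isIso_of_iso (F : C ⥤ D) [F.Full] [F.Faithful] (hb : Function.Bijective F.obj) :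
    IsIso (show Cat.of C ⟶ Cat.of D from F.toCatHom) :=
  ⟨(invFunctor F hb).toCatHom, Cat.ext (comp_inv F hb), Cat.ext (inv_comp F hb)⟩

end Aux

/-- a functor between small categories has the right lifting property with
respect to `0 → 1`, `2 → 𝟚`, `2 → 1` and `ℙ → 𝟚` iff it is an isomorphism of
categories (fully faithful and bijective on objects). -/
theorem rlp_iff_isomorphism_of_categories
    {C D : Type} [SmallCategory C] [SmallCategory D] (F : C ⥤ D) :
    (HasLiftingProperty emptyToPt (show Cat.of C ⟶ Cat.of D from F.toCatHom) ∧
     HasLiftingProperty twoToInterval (show Cat.of C ⟶ Cat.of D from F.toCatHom) ∧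
     HasLiftingProperty twoToPt (show Cat.of C ⟶ Cat.of D from F.toCatHom) ∧
     HasLiftingProperty parallelPairToInterval (show Cat.of C ⟶ Cat.of D from F.toCatHom)) ↔
    (F.Full ∧ F.Faithful ∧ Function.Bijective F.obj) := by
  constructor
  · rintro ⟨h1, h2, h3, h4⟩
    exact ⟨rlpFull F h2, ⟨fun {c₀ c₁ f g} hfg => rlpFaithful F h4 f g hfg⟩,
      rlpInj F h3, rlpSurj F h1⟩
  · rintro ⟨hFull, hFaith, hb⟩
    haveI := hFull
    haveI := hFaith
    haveI := isIso_of_iso F hb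
    exact ⟨inferInstance, inferInstance, inferInstance, inferInstance⟩
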